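/- arXiv:1811.07808 — 2 statements merged into one kernel-verified Lean document; each statement's English description precedes it below -/
import Mathlib

section
/- For all vectors n₁, n₂ ∈ ℝ³, writing n = n₁ + n₂, one has ⟨n₁⟩ + ⟨n₂⟩ − ⟨n⟩ ≥ 2(|n₁||n₂| − n₁·n₂)/(⟨n⟩ + ⟨n₁⟩ + ⟨n₂⟩) ≥ 0. (When n₁, n₂ ≠ 0, the quantity |n₁||n₂| − n₁·n₂ equals |n₁||n₂|(1 − cos θ), where θ is the angle between n₁ and n₂.) -/
open scoped RealInnerProductSpace

/-- Japanese bracket of `x ∈ ℝ³`: `⟨x⟩ = (1 + |x|²)^{1/2}`. -/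
noncomputable def jbE (x : EuclideanSpace ℝ (Fin 3)) : ℝ :=
  Real.sqrt (1 + ‖x‖ ^ 2)

lemma jbE_ge_one (x : EuclideanSpace ℝ (Fin 3)) : 1 ≤ jbE x := by
  have h := Real.sqrt_le_sqrt (show (1:ℝ) ≤ 1 + ‖x‖ ^ 2 by nlinarith [sq_nonneg ‖x‖])
  simp only [jbE]; simp at h; convert h using 2; simp

lemma jbE_sq (x : EuclideanSpace ℝ (Fin 3)) : jbE x ^ 2 = 1 + ‖x‖ ^ 2 :=
  Real.sq_sqrt (by positivity)

theorem resonance_lower_bound'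
    (n₁ n₂ : EuclideanSpace ℝ (Fin 3)) :
    0 ≤ 2 * (‖n₁‖ * ‖n₂‖ - ⟪n₁, n₂⟫)
          / (jbE (n₁ + n₂) + jbE n₁ + jbE n₂) ∧
    2 * (‖n₁‖ * ‖n₂‖ - ⟪n₁, n₂⟫)
          / (jbE (n₁ + n₂) + jbE n₁ + jbE n₂)
      ≤ jbE n₁ + jbE n₂ - jbE (n₁ + n₂) := by
  have h1 := jbE_ge_one (n₁ + n₂)
  have h2 := jbE_ge_one n₁
  have h3 := jbE_ge_one n₂
  have hD : 0 < jbE (n₁ + n₂) + jbE n₁ + jbE n₂ := by linarith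
  have hCS : ⟪n₁, n₂⟫ ≤ ‖n₁‖ * ‖n₂‖ := real_inner_le_norm n₁ n₂
  have hab : ‖n₁‖ * ‖n₂‖ ≤ jbE n₁ * jbE n₂ := by
    have : ‖n₁‖ * ‖n₂‖ = Real.sqrt (‖n₁‖ ^ 2 * ‖n₂‖ ^ 2) := by
      rw [Real.sqrt_mul (by positivity), Real.sqrt_sq (norm_nonneg _),
        Real.sqrt_sq (norm_nonneg _)]
    rw [this, jbE, jbE, ← Real.sqrt_mul (by positivity)]
    apply Real.sqrt_le_sqrt
    nlinarith [sq_nonneg ‖n₁‖, sq_nonneg ‖n₂‖]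
  constructor
  · apply div_nonneg _ hD.le
    linarith
  · rw [div_le_iff₀ hD]
    have hnorm : ‖n₁ + n₂‖ ^ 2 = ‖n₁‖ ^ 2 + 2 * ⟪n₁, n₂⟫ + ‖n₂‖ ^ 2 :=
      norm_add_sq_real n₁ n₂
    nlinarith [jbE_sq (n₁ + n₂), jbE_sq n₁, jbE_sq n₂, sq_nonneg (jbE n₁ + jbE n₂ - jbE (n₁ + n₂))]
end

section
/- For every T > 0 there exists a constant C(T) > 0 (one may take C(T) = 2T⁴ + T⁵) such that for all real numbers κ₃, κ₄ and all t ∈ [0, T]: | ∫₀ᵗ t₁ e^{−iκ₃ t₁} ( ∫₀^{t₁} t₂² e^{−iκ₄ t₂} dt₂ ) dt₁ | ≤ C(T) (1 + |κ₃|)^{−1}. -/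
lemma exp_norm_one (a b : ℝ) : ‖Complex.exp (-Complex.I * a * b)‖ = 1 := by
  rw [Complex.norm_exp]; simp

lemma inner_norm (a t₂ : ℝ) : ‖(t₂:ℂ)^2 * Complex.exp (-Complex.I * a * t₂)‖ = t₂^2 := by
  rw [norm_mul, exp_norm_one]
  simp [map_pow, sq_abs]

lemma inner_bound (κ₄ x : ℝ) (hx : 0 ≤ x) :
    ‖∫ t₂ in (0:ℝ)..x, (t₂:ℂ)^2 * Complex.exp (-Complex.I * κ₄ * t₂)‖ ≤ x^3 / 3 := by
  calc ‖∫ t₂ in (0:ℝ)..x, (t₂:ℂ)^2 * Complex.exp (-Complex.I * κ₄ * t₂)‖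
      ≤ ∫ t₂ in (0:ℝ)..x, ‖(t₂:ℂ)^2 * Complex.exp (-Complex.I * κ₄ * t₂)‖ :=
        intervalIntegral.norm_integral_le_integral_norm hx
    _ = ∫ t₂ in (0:ℝ)..x, t₂^2 := by
        apply intervalIntegral.integral_congr; intro y _; exact inner_norm κ₄ y
    _ = x^3/3 := by rw [integral_pow]; norm_num

theorem oscillatory_integral_bound_weighted
    (T : ℝ) (hT : 0 < T) (κ₃ κ₄ : ℝ) (t : ℝ) (ht : t ∈ Set.Icc 0 T) :
    ‖∫ t₁ in (0:ℝ)..t, (t₁ : ℂ) * Complex.exp (-Complex.I * κ₃ * t₁) *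
        ∫ t₂ in (0:ℝ)..t₁, (t₂ : ℂ) ^ 2 * Complex.exp (-Complex.I * κ₄ * t₂)‖
      ≤ (2 * T ^ 4 + T ^ 5) * (1 + |κ₃|)⁻¹ := by
  obtain ⟨ht0, htT⟩ := ht
  set g : ℝ → ℂ := fun x => ∫ t₂ in (0:ℝ)..x, (t₂:ℂ)^2 * Complex.exp (-Complex.I * κ₄ * t₂) with hg_def
  have hgb : ∀ x : ℝ, 0 ≤ x → ‖g x‖ ≤ x^3/3 := fun x hx => inner_bound κ₄ x hx
  have hcont : Continuous fun t₂ : ℝ => (t₂:ℂ)^2 * Complex.exp (-Complex.I * κ₄ * t₂) := by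
    fun_prop
  have habs : 0 < 1 + |κ₃| := by positivity
  rcases le_or_gt |κ₃| 1 with hk | hk
  · -- small frequency: trivial bound
    have hptb : ∀ x ∈ Set.uIoc (0:ℝ) t,
        ‖(x : ℂ) * Complex.exp (-Complex.I * κ₃ * x) * g x‖ ≤ T^4/3 := by
      intro x hx
      rw [Set.uIoc_of_le ht0] at hx
      have hx0 : 0 ≤ x := le_of_lt hx.1
      have hxT : x ≤ T := hx.2.trans htT
      rw [norm_mul, norm_mul, exp_norm_one, mul_one, Complex.norm_real,
        Real.norm_eq_abs, abs_of_nonneg hx0]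
      calc x * ‖g x‖ ≤ x * (x^3/3) := mul_le_mul_of_nonneg_left (hgb x hx0) hx0
        _ ≤ T * (T^3/3) := by gcongr
        _ = T^4/3 := by ring
    have h1 : ‖∫ t₁ in (0:ℝ)..t, (t₁ : ℂ) * Complex.exp (-Complex.I * κ₃ * t₁) * g t₁‖
        ≤ T^4/3 * |t - 0| := intervalIntegral.norm_integral_le_of_norm_le_const hptb
    have h2 : T^4/3 * |t - 0| ≤ T^5/3 := by
      rw [sub_zero, abs_of_nonneg ht0]
      calc T^4/3 * t ≤ T^4/3 * T := by gcongr
        _ = T^5/3 := by ring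
    have h3 : (2:ℝ)⁻¹ ≤ (1 + |κ₃|)⁻¹ := by
      apply inv_anti₀ habs; linarith
    calc ‖∫ t₁ in (0:ℝ)..t, (t₁ : ℂ) * Complex.exp (-Complex.I * κ₃ * t₁) * g t₁‖
        ≤ T^5/3 := h1.trans h2
      _ ≤ (2*T^4 + T^5) * (2:ℝ)⁻¹ := by nlinarith [pow_pos hT 4, pow_pos hT 5]
      _ ≤ (2*T^4 + T^5) * (1 + |κ₃|)⁻¹ := by
          apply mul_le_mul_of_nonneg_left h3; positivity
  · -- large frequency: integrate by parts
    have hk1 : (1:ℝ) ≤ |κ₃| := hk.le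
    have hkpos : (0:ℝ) < |κ₃| := by linarith
    have hk0 : κ₃ ≠ 0 := by
      intro h; rw [h] at hk; simp at hk; linarith
    set c : ℂ := -Complex.I * κ₃ with hc_def
    have hc0 : c ≠ 0 := by simp [hc_def, Complex.ext_iff, hk0]
    have hcnorm : ‖c‖ = |κ₃| := by simp [hc_def]
    have hgd : ∀ x : ℝ, HasDerivAt g ((x:ℂ)^2 * Complex.exp (-Complex.I * κ₄ * x)) x := by
      intro x
      exact intervalIntegral.integral_hasDerivAt_right (hcont.intervalIntegrable 0 x)
        (hcont.stronglyMeasurableAtFilter _ _) hcont.continuousAt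
    have hgc : Continuous g := continuous_iff_continuousAt.mpr fun x => (hgd x).continuousAt
    have hud : ∀ x : ℝ, HasDerivAt (fun x : ℝ => (x:ℂ) * g x)
        (g x + (x:ℂ) * ((x:ℂ)^2 * Complex.exp (-Complex.I * κ₄ * x))) x := by
      intro x
      have h1 : HasDerivAt (fun x : ℝ => (x:ℂ)) 1 x := by
        simpa using (hasDerivAt_id x).ofReal_comp
      exact (h1.mul (hgd x)).congr_deriv (by ring)
    have hvd : ∀ x : ℝ, HasDerivAt (fun x : ℝ => Complex.exp (c*x) / c)
        (Complex.exp (c*x)) x := by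
      intro x
      have h1 : HasDerivAt (fun x : ℝ => (x:ℂ)) 1 x := by
        simpa using (hasDerivAt_id x).ofReal_comp
      have h2 : HasDerivAt (fun x : ℝ => c * (x:ℂ)) c x := by simpa using h1.const_mul c
      have h4 := h2.cexp.div_const c
      have heq : Complex.exp (c*x) * c / c = Complex.exp (c*x) := by field_simp
      rwa [heq] at h4
    have hu'cont : Continuous fun x : ℝ =>
        g x + (x:ℂ) * ((x:ℂ)^2 * Complex.exp (-Complex.I * κ₄ * x)) :=
      hgc.add (Complex.continuous_ofReal.mul hcont)
    have hvcont : Continuous fun x : ℝ => Complex.exp (c*x) / c := by fun_prop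
    have hv'cont : Continuous fun x : ℝ => Complex.exp (c*x) := by fun_prop
    have hparts := intervalIntegral.integral_mul_deriv_eq_deriv_mul
      (u := fun x : ℝ => (x:ℂ) * g x) (v := fun x : ℝ => Complex.exp (c*x) / c)
      (u' := fun x : ℝ => g x + (x:ℂ) * ((x:ℂ)^2 * Complex.exp (-Complex.I * κ₄ * x)))
      (v' := fun x : ℝ => Complex.exp (c*x)) (a := 0) (b := t)
      (fun x _ => hud x) (fun x _ => hvd x)
      (hu'cont.intervalIntegrable 0 t) (hv'cont.intervalIntegrable 0 t)
    have hrw : (∫ t₁ in (0:ℝ)..t, (t₁ : ℂ) * Complex.exp (-Complex.I * κ₃ * t₁) * g t₁)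
        = ∫ x in (0:ℝ)..t, ((x:ℂ) * g x) * Complex.exp (c*x) := by
      apply intervalIntegral.integral_congr
      intro x _
      simp only [hc_def]
      ring
    rw [hrw, hparts]
    have hvnorm : ∀ x : ℝ, ‖Complex.exp (c*x) / c‖ = |κ₃|⁻¹ := by
      intro x
      rw [norm_div, hcnorm]
      have : ‖Complex.exp (c*x)‖ = 1 := by rw [hc_def]; exact exp_norm_one κ₃ x
      rw [this, one_div]
    -- boundary term
    have hbd : ‖((t:ℂ) * g t) * (Complex.exp (c*t) / c) - ((0:ℝ):ℂ) * g 0 * (Complex.exp (c*0) / c)‖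
        ≤ T^4/3 * |κ₃|⁻¹ := by
      simp only [Complex.ofReal_zero, zero_mul, sub_zero]
      rw [norm_mul, hvnorm]
      apply mul_le_mul_of_nonneg_right _ (by positivity)
      rw [norm_mul, Complex.norm_real, Real.norm_eq_abs, abs_of_nonneg ht0]
      calc t * ‖g t‖ ≤ t * (t^3/3) := mul_le_mul_of_nonneg_left (hgb t ht0) ht0
        _ ≤ T * (T^3/3) := by gcongr
        _ = T^4/3 := by ring
    -- integral term
    have hib : ‖∫ x in (0:ℝ)..t, (g x + (x:ℂ) * ((x:ℂ)^2 * Complex.exp (-Complex.I * κ₄ * x)))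
          * (Complex.exp (c*x) / c)‖ ≤ T^4/3 * |κ₃|⁻¹ := by
      have step1 : ‖∫ x in (0:ℝ)..t, (g x + (x:ℂ) * ((x:ℂ)^2 * Complex.exp (-Complex.I * κ₄ * x)))
            * (Complex.exp (c*x) / c)‖
          ≤ ∫ x in (0:ℝ)..t, ‖(g x + (x:ℂ) * ((x:ℂ)^2 * Complex.exp (-Complex.I * κ₄ * x)))
            * (Complex.exp (c*x) / c)‖ :=
        intervalIntegral.norm_integral_le_integral_norm ht0
      have step2 : (∫ x in (0:ℝ)..t, ‖(g x + (x:ℂ) * ((x:ℂ)^2 * Complex.exp (-Complex.I * κ₄ * x)))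
            * (Complex.exp (c*x) / c)‖)
          ≤ ∫ x in (0:ℝ)..t, x^3 * (4/3 * |κ₃|⁻¹) := by
        apply intervalIntegral.integral_mono_on ht0
        · exact ((hu'cont.mul hvcont).norm.intervalIntegrable 0 t)
        · exact (by fun_prop : Continuous fun x : ℝ => x^3 * (4/3 * |κ₃|⁻¹)).intervalIntegrable 0 t
        · intro x hx
          have hx0 : 0 ≤ x := hx.1
          rw [norm_mul, hvnorm]
          have h1 : ‖g x + (x:ℂ) * ((x:ℂ)^2 * Complex.exp (-Complex.I * κ₄ * x))‖ ≤ 4*x^3/3 := by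
            calc ‖g x + (x:ℂ) * ((x:ℂ)^2 * Complex.exp (-Complex.I * κ₄ * x))‖
                ≤ ‖g x‖ + ‖(x:ℂ) * ((x:ℂ)^2 * Complex.exp (-Complex.I * κ₄ * x))‖ :=
                  norm_add_le _ _
              _ ≤ x^3/3 + x^3 := by
                  apply add_le_add (hgb x hx0)
                  rw [norm_mul, inner_norm κ₄ x, Complex.norm_real, Real.norm_eq_abs,
                    abs_of_nonneg hx0]
                  nlinarith
              _ = 4*x^3/3 := by ring
          calc ‖g x + (x:ℂ) * ((x:ℂ)^2 * Complex.exp (-Complex.I * κ₄ * x))‖ * |κ₃|⁻¹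
              ≤ (4*x^3/3) * |κ₃|⁻¹ := by
                apply mul_le_mul_of_nonneg_right h1 (by positivity)
            _ = x^3 * (4/3 * |κ₃|⁻¹) := by ring
      have step3 : (∫ x in (0:ℝ)..t, x^3 * (4/3 * |κ₃|⁻¹)) ≤ T^4/3 * |κ₃|⁻¹ := by
        rw [intervalIntegral.integral_mul_const, integral_pow]
        norm_num
        calc t^4/4 * (4/3 * |κ₃|⁻¹) = t^4/3 * |κ₃|⁻¹ := by ring
          _ ≤ T^4/3 * |κ₃|⁻¹ := by gcongr
      exact step1.trans (step2.trans step3)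
    have hinv : |κ₃|⁻¹ ≤ 2 * (1 + |κ₃|)⁻¹ := by
      rw [show (2:ℝ) * (1+|κ₃|)⁻¹ = 2/(1+|κ₃|) by ring, inv_eq_one_div,
        div_le_div_iff₀ hkpos habs]
      linarith
    calc ‖((t:ℂ) * g t) * (Complex.exp (c*t) / c) - ((0:ℝ):ℂ) * g 0 * (Complex.exp (c*0) / c)
          - ∫ x in (0:ℝ)..t, (g x + (x:ℂ) * ((x:ℂ)^2 * Complex.exp (-Complex.I * κ₄ * x)))
            * (Complex.exp (c*x) / c)‖
        ≤ ‖((t:ℂ) * g t) * (Complex.exp (c*t) / c) - ((0:ℝ):ℂ) * g 0 * (Complex.exp (c*0) / c)‖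
          + ‖∫ x in (0:ℝ)..t, (g x + (x:ℂ) * ((x:ℂ)^2 * Complex.exp (-Complex.I * κ₄ * x)))
            * (Complex.exp (c*x) / c)‖ := norm_sub_le _ _
      _ ≤ T^4/3 * |κ₃|⁻¹ + T^4/3 * |κ₃|⁻¹ := add_le_add hbd hib
      _ = 2/3 * T^4 * |κ₃|⁻¹ := by ring
      _ ≤ 2/3 * T^4 * (2 * (1 + |κ₃|)⁻¹) := by
          apply mul_le_mul_of_nonneg_left hinv (by positivity)
      _ = 4/3 * T^4 * (1 + |κ₃|)⁻¹ := by ring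
      _ ≤ (2*T^4 + T^5) * (1 + |κ₃|)⁻¹ := by
          apply mul_le_mul_of_nonneg_right _ (by positivity)
          nlinarith [pow_pos hT 4, pow_pos hT 5]
end
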